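/- Let α ≥ 1 and let e : [0,1] → ℝ be differentiable with e'(t) = -α e(t) + r(t), where |r(t)| ≤ K(1-t) for some constant K ≥ 0. Then |e(t)| ≤ |e(0)| e^{-αt} + K(1-t)/α + (K/α²)(1 - e^{-αt}) for all t ∈ [0,1]. -/

import Mathlib

theorem stmt4 (α K : ℝ) (hα : 1 ≤ α) (hK : 0 ≤ K) (e r : ℝ → ℝ)
    (hode : ∀ t ∈ Set.Icc (0:ℝ) 1, HasDerivAt e (-α * e t + r t) t)
    (hr : ∀ t ∈ Set.Icc (0:ℝ) 1, |r t| ≤ K * (1 - t)) :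
    ∀ t ∈ Set.Icc (0:ℝ) 1,
      |e t| ≤ |e 0| * Real.exp (-α * t) + K * (1 - t) / α
              + (K / α ^ 2) * (1 - Real.exp (-α * t)) := by
  have hα0 : (0:ℝ) < α := lt_of_lt_of_le one_pos hα
  set ψ : ℝ → ℝ := fun t => e t * Real.exp (α * t) with hψdef
  set G : ℝ → ℝ := fun t =>
    K * ((1 - t) * Real.exp (α * t) / α + Real.exp (α * t) / α ^ 2) with hGdef
  have hexp : ∀ t : ℝ, HasDerivAt (fun t => Real.exp (α * t)) (Real.exp (α * t) * α) t := by
    intro t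
    simpa using ((hasDerivAt_id t).const_mul α).exp
  have hψd : ∀ t ∈ Set.Icc (0:ℝ) 1, HasDerivAt ψ (r t * Real.exp (α * t)) t := by
    intro t ht
    have := (hode t ht).mul (hexp t)
    refine this.congr_deriv ?_
    ring
  have hGd : ∀ t : ℝ, HasDerivAt G (K * ((1 - t) * Real.exp (α * t))) t := by
    intro t
    have h1 : HasDerivAt (fun t : ℝ => (1 - t)) (-1) t := by
      simpa using (hasDerivAt_id t).const_sub 1
    have h2 := ((h1.mul (hexp t)).div_const α).add ((hexp t).div_const (α ^ 2))
    have h3 := h2.const_mul K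
    refine h3.congr_deriv ?_
    field_simp
    ring
  -- monotonicity of G ∓ ψ
  have key : ∀ s : ℝ, s = 1 ∨ s = -1 →
      MonotoneOn (fun t => G t + s * ψ t) (Set.Icc (0:ℝ) 1) := by
    intro s hs
    have hd : ∀ t ∈ Set.Icc (0:ℝ) 1,
        HasDerivAt (fun t => G t + s * ψ t)
          (K * ((1 - t) * Real.exp (α * t)) + s * (r t * Real.exp (α * t))) t :=
      fun t ht => (hGd t).add ((hψd t ht).const_mul s)
    apply monotoneOn_of_deriv_nonneg (convex_Icc 0 1)
    · exact fun t ht => (hd t ht).differentiableAt.continuousAt.continuousWithinAt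
    · intro t ht
      rw [interior_Icc] at ht
      exact ((hd t (Set.mem_Icc_of_Ioo ht)).differentiableAt).differentiableWithinAt
    · intro t ht
      rw [interior_Icc] at ht
      have ht' : t ∈ Set.Icc (0:ℝ) 1 := Set.mem_Icc_of_Ioo ht
      rw [(hd t ht').deriv]
      have hrt := hr t ht'
      have hE : (0:ℝ) < Real.exp (α * t) := Real.exp_pos _
      have habs : |s * r t| ≤ K * (1 - t) := by
        rcases hs with h | h <;> simp [h, abs_neg] <;> simpa using hrt
      nlinarith [neg_abs_le (s * r t), hE]
  intro t ht
  have h0 : (0:ℝ) ∈ Set.Icc (0:ℝ) 1 := by constructor <;> norm_num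
  have ht0 : (0:ℝ) ≤ t := ht.1
  have hm1 := key 1 (Or.inl rfl) h0 ht ht0
  have hm2 := key (-1) (Or.inr rfl) h0 ht ht0
  simp only at hm1 hm2
  -- |ψ t| ≤ |ψ 0| + (G t - G 0)
  have habsψ : |ψ t| ≤ |ψ 0| + (G t - G 0) := by
    rw [abs_le]
    constructor
    · nlinarith [neg_abs_le (ψ 0)]
    · nlinarith [le_abs_self (ψ 0)]
  have hψ0 : ψ 0 = e 0 := by simp [hψdef]
  have hEE : Real.exp (α * t) * Real.exp (-α * t) = 1 := by
    rw [← Real.exp_add]; ring_nf; exact Real.exp_zero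
  have hE' : (0:ℝ) < Real.exp (-α * t) := Real.exp_pos _
  have het : e t = ψ t * Real.exp (-α * t) := by
    simp only [hψdef]
    rw [mul_assoc, hEE, mul_one]
  have h1 : |e t| = |ψ t| * Real.exp (-α * t) := by
    rw [het, abs_mul, abs_of_pos hE']
  rw [h1]
  have h2 : |ψ t| * Real.exp (-α * t) ≤ (|e 0| + (G t - G 0)) * Real.exp (-α * t) := by
    apply mul_le_mul_of_nonneg_right _ hE'.le
    rw [← hψ0]; exact habsψ
  refine h2.trans ?_
  have hGt : G t = K * ((1 - t) * Real.exp (α * t) / α + Real.exp (α * t) / α ^ 2) := rfl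
  have hG0 : G 0 = K * (1 / α + 1 / α ^ 2) := by simp [hGdef]
  rw [hGt, hG0]
  have hα2 : (0:ℝ) < α ^ 2 := by positivity
  have expand : (|e 0| + (K * ((1 - t) * Real.exp (α * t) / α + Real.exp (α * t) / α ^ 2)
      - K * (1 / α + 1 / α ^ 2))) * Real.exp (-α * t)
      = |e 0| * Real.exp (-α * t) + K * (1 - t) / α + K / α ^ 2
        - K * Real.exp (-α * t) * (1 / α + 1 / α ^ 2) := by
    linear_combination (K * (1 - t) / α + K / α ^ 2) * hEE
  rw [expand]
  have : 0 ≤ K * Real.exp (-α * t) / α := by positivity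
  have h3 : K * Real.exp (-α * t) * (1 / α + 1 / α ^ 2)
      = K * Real.exp (-α * t) / α + K * Real.exp (-α * t) / α ^ 2 := by ring
  have h4 : K / α ^ 2 * (1 - Real.exp (-α * t))
      = K / α ^ 2 - K * Real.exp (-α * t) / α ^ 2 := by ring
  linarith [this, h3, h4]
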